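/- arXiv:2508.07411 — 3 statements merged into one kernel-verified Lean document; each statement's English description precedes it below -/
import Mathlib

section
/- Let n ≥ 2 be an integer, fix 1 ≤ k ≤ n−1, let r ≥ 1 be a real number, let b ≤ ∞, and let 0 ≤ x₁ ≤ x₂ ≤ … ≤ xₙ < b. Let t₁,…,tₙ be real numbers (not necessarily nonnegative) with Σ_{i=1}^n tᵢ = 1, satisfying: 0 ≤ Σ_{i=1}^{j} tᵢ ≤ 1 for all 1 ≤ j ≤ n; Σ_{i=1}^{j} tᵢ ≤ Σ_{i=1}^{k} tᵢ for all j ≤ k; t_{k+1} > 0; 0 ≤ Σ_{i=k+1}^{l} tᵢ ≤ Σ_{i=k+1}^{n} tᵢ for all k+1 ≤ l ≤ n; and 0 < P_k < 1 where P_k := Σ_{i=1}^{k} tᵢ. Set x̄ = Σ_{i=1}^n tᵢxᵢ, yᵢ = xᵢ − x̄, and x_{1,k} = Σ_{i=1}^{k} tᵢxᵢ / P_k. Then |x_{1,k} − x̄| ≤ ( Σ_{i=1}^n tᵢ|yᵢ|^{2r} / ( P_k + P_k^{2r}·(1−P_k)^{1−2r} ) )^{1/(2r)} ≤ ( ( Σ_{i=1}^n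 tᵢxᵢ^{2r} − x̄^{2r} ) / ( P_k + P_k^{2r}·(1−P_k)^{1−2r} ) )^{1/(2r)}. -/
open Finset



lemma left_abel (t u : ℕ → ℝ) : ∀ m : ℕ, 1 ≤ m →
    (∀ i, i + 1 < m → u (i + 1) ≤ u i) →
    (∀ j, j ≤ m → 0 ≤ ∑ i ∈ range j, t i) →
    (∑ i ∈ range m, t i) * u (m - 1) ≤ ∑ i ∈ range m, t i * u i := by
  intro m
  induction m with
  | zero => intro h; omega
  | succ m ih =>
    intro _ hu hS
    rcases Nat.eq_zero_or_pos m with hm | hm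
    · subst hm; simp
    · have h1 := ih hm (fun i hi => hu i (by omega)) (fun j hj => hS j (by omega))
      have h2 : u m ≤ u (m - 1) := by
        have := hu (m - 1) (by omega)
        rwa [Nat.sub_add_cancel hm] at this
      have h3 : 0 ≤ ∑ i ∈ range m, t i := hS m (by omega)
      have h4 : (∑ i ∈ range m, t i) * u m ≤ (∑ i ∈ range m, t i) * u (m - 1) :=
        mul_le_mul_of_nonneg_left h2 h3
      rw [sum_range_succ, sum_range_succ]
      simp only [Nat.add_sub_cancel]
      nlinarith [h1]

lemma right_abel (t u : ℕ → ℝ) (N : ℕ) : ∀ c : ℕ, c ≤ N →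
    (∀ i, N - c ≤ i → i + 1 < N → u i ≤ u (i + 1)) →
    (∀ j, N - c ≤ j → j ≤ N → 0 ≤ ∑ i ∈ Ico j N, t i) →
    (∑ i ∈ Ico (N - c) N, t i) * u (N - c) ≤ ∑ i ∈ Ico (N - c) N, t i * u i := by
  intro c
  induction c with
  | zero => intro _ _ _; simp
  | succ c ih =>
    intro hc hu hS
    have hj : N - (c + 1) < N := by omega
    have hj1 : N - (c + 1) + 1 = N - c := by omega
    rw [Finset.sum_eq_sum_Ico_succ_bot hj t, Finset.sum_eq_sum_Ico_succ_bot hj (fun i => t i * u i), hj1]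
    have h1 := ih (by omega) (fun i hi h2 => hu i (by omega) h2) (fun j h1 h2 => hS j (by omega) h2)
    rcases Nat.eq_zero_or_pos c with hc0 | hc0
    · subst hc0; simp
    · have h2 : u (N - (c + 1)) ≤ u (N - c) := by
        have := hu (N - (c + 1)) (by omega) (by omega)
        rwa [hj1] at this
      have h3 : 0 ≤ ∑ i ∈ Ico (N - c) N, t i := hS (N - c) (by omega) (by omega)
      nlinarith [h1]


lemma js_core (N : ℕ) (t x : ℕ → ℝ) (Z : ℝ) (ψ : ℝ → ℝ)
    (hxm : ∀ i, i + 1 < N → x i ≤ x (i + 1))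
    (hS1 : ∀ j, j ≤ N → 0 ≤ ∑ i ∈ range j, t i)
    (hS2 : ∀ j, j ≤ N → ∑ i ∈ range j, t i ≤ ∑ i ∈ range N, t i)
    (hpos : ∀ i, i < N → 0 ≤ ψ (x i))
    (hA : ∀ i, i + 1 < N → x (i + 1) ≤ Z → ψ (x (i + 1)) ≤ ψ (x i))
    (hB : ∀ i, i + 1 < N → Z < x i → ψ (x i) ≤ ψ (x (i + 1))) :
    0 ≤ ∑ i ∈ range N, t i * ψ (x i) := by
  classical
  have hchain : ∀ i j, i ≤ j → j < N → x i ≤ x j := by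
    intro i j hij hjN
    induction j, hij using Nat.le_induction with
    | base => exact le_refl _
    | succ j hj ihj => exact le_trans (ihj (by omega)) (hxm j (by omega))
  -- split point
  by_cases hex : ∃ i, i < N ∧ Z < x i
  · set m := Nat.find hex with hm
    obtain ⟨hmN, hZm⟩ := Nat.find_spec hex
    have hle : ∀ i, i < m → x i ≤ Z := by
      intro i hi
      have := Nat.find_min hex hi
      push_neg at this
      exact this (by omega)
    have hgt : ∀ i, m ≤ i → i < N → Z < x i := by
      intro i hmi hiN
      exact lt_of_lt_of_le hZm (hchain m i hmi hiN)
    -- split the sum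
    have hsplit : ∑ i ∈ range N, t i * ψ (x i)
        = (∑ i ∈ range m, t i * ψ (x i)) + ∑ i ∈ Ico m N, t i * ψ (x i) := by
      simp only [range_eq_Ico]
      exact (Finset.sum_Ico_consecutive (f := fun i => t i * ψ (x i)) (Nat.zero_le m) hmN.le).symm
    have hLeft : 0 ≤ ∑ i ∈ range m, t i * ψ (x i) := by
      rcases Nat.eq_zero_or_pos m with h0 | h0
      · simp [h0]
      · have h1 := left_abel t (fun i => ψ (x i)) m h0
          (fun i hi => hA i (by omega) (hle (i+1) (by omega)))
          (fun j hj => hS1 j (by omega))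
        have h2 : 0 ≤ (∑ i ∈ range m, t i) * ψ (x (m - 1)) :=
          mul_nonneg (hS1 m (by omega)) (hpos (m-1) (by omega))
        linarith
    have hRight : 0 ≤ ∑ i ∈ Ico m N, t i * ψ (x i) := by
      have hSico : ∀ j, j ≤ N → 0 ≤ ∑ i ∈ Ico j N, t i := by
        intro j hj
        have : (∑ i ∈ range j, t i) + ∑ i ∈ Ico j N, t i = ∑ i ∈ range N, t i := by
          simp only [range_eq_Ico]
          exact Finset.sum_Ico_consecutive (f := t) (Nat.zero_le j) hj
        have := hS2 j hj
        linarith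
      have hNm : N - (N - m) = m := by omega
      have h1 := right_abel t (fun i => ψ (x i)) N (N - m) (by omega)
        (by intro i hi h2
            exact hB i h2 (hgt i (by omega) (by omega)))
        (by intro j h1 h2; exact hSico j h2)
      rw [hNm] at h1
      have h2 : 0 ≤ (∑ i ∈ Ico m N, t i) * ψ (x m) :=
        mul_nonneg (hSico m hmN.le) (hpos m hmN)
      linarith
    linarith
  · push_neg at hex
    rcases Nat.eq_zero_or_pos N with h0 | h0
    · simp [h0]
    · have h1 := left_abel t (fun i => ψ (x i)) N h0
        (fun i hi => hA i hi (le_of_not_gt (by exact fun h => absurd h (not_lt.2 (hex (i+1) (by omega))))))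
        (fun j hj => hS1 j hj)
      have h2 : 0 ≤ (∑ i ∈ range N, t i) * ψ (x (N - 1)) :=
        mul_nonneg (hS1 N le_rfl) (hpos (N-1) (by omega))
      linarith


lemma js_icc (a b : ℕ) (hab : a ≤ b) (t x : ℕ → ℝ) (Z : ℝ) (ψ : ℝ → ℝ)
    (hxm : ∀ i, a ≤ i → i < b → x i ≤ x (i + 1))
    (hS1 : ∀ j, a ≤ j → j ≤ b → 0 ≤ ∑ i ∈ Icc a j, t i)
    (hS2 : ∀ j, a ≤ j → j ≤ b → ∑ i ∈ Icc a j, t i ≤ ∑ i ∈ Icc a b, t i)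
    (hpos : ∀ i, a ≤ i → i ≤ b → 0 ≤ ψ (x i))
    (hA : ∀ i, a ≤ i → i < b → x (i + 1) ≤ Z → ψ (x (i + 1)) ≤ ψ (x i))
    (hB : ∀ i, a ≤ i → i < b → Z < x i → ψ (x i) ≤ ψ (x (i + 1))) :
    0 ≤ ∑ i ∈ Icc a b, t i * ψ (x i) := by
  have key : ∀ j, j ≤ b + 1 - a → ∑ i ∈ range j, t (a + i) = ∑ i ∈ Ico a (a + j), t i := by
    intro j hj
    rw [Finset.sum_Ico_eq_sum_range]
    simp
  have keyIcc : ∀ (f : ℕ → ℝ) j, a ≤ j → j ≤ b →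
      ∑ i ∈ range (j + 1 - a), f (a + i) = ∑ i ∈ Icc a j, f i := by
    intro f j haj hjb
    rw [← Finset.Ico_add_one_right_eq_Icc, Finset.sum_Ico_eq_sum_range]
  have hfull : ∀ (f : ℕ → ℝ), ∑ i ∈ range (b + 1 - a), f (a + i) = ∑ i ∈ Icc a b, f i :=
    fun f => keyIcc f b hab le_rfl
  rw [← hfull (fun i => t i * ψ (x i))]
  apply js_core (b + 1 - a) (fun i => t (a + i)) (fun i => x (a + i)) Z ψ
  · intro i hi
    have : a + (i + 1) = (a + i) + 1 := by omega
    rw [this]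
    exact hxm (a + i) (by omega) (by omega)
  · intro j hj
    rcases Nat.eq_zero_or_pos j with h0 | h0
    · simp [h0]
    · have hj' : a + j - 1 + 1 - a = j := by omega
      have := keyIcc t (a + j - 1) (by omega) (by omega)
      rw [hj'] at this
      rw [this]
      exact hS1 (a + j - 1) (by omega) (by omega)
  · intro j hj
    rcases Nat.eq_zero_or_pos j with h0 | h0
    · subst h0
      simp only [range_zero, sum_empty]
      rw [hfull t]
      exact hS1 b hab le_rfl
    · have hj' : a + j - 1 + 1 - a = j := by omega
      have := keyIcc t (a + j - 1) (by omega) (by omega)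
      rw [hj'] at this
      rw [this, hfull t]
      exact hS2 (a + j - 1) (by omega) (by omega)
  · intro i hi
    exact hpos (a + i) (by omega) (by omega)
  · intro i hi hxz
    have : a + (i + 1) = (a + i) + 1 := by omega
    rw [this] at hxz ⊢
    exact hA (a + i) (by omega) (by omega) hxz
  · intro i hi hxz
    have : a + (i + 1) = (a + i) + 1 := by omega
    rw [this]
    exact hB (a + i) (by omega) (by omega) hxz


noncomputable def hfun (r w : ℝ) : ℝ := (w ^ 2) ^ r
noncomputable def tfun (r w : ℝ) : ℝ := 2 * r * w * (w ^ 2) ^ (r - 1)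

lemma hfun_hasDeriv (r : ℝ) (hr : 1 ≤ r) (w : ℝ) :
    HasDerivAt (hfun r) (tfun r w) w := by
  have h1 : HasDerivAt (fun w : ℝ => w ^ 2) (2 * w) w := by
    simpa using hasDerivAt_pow 2 w
  have h2 := h1.rpow_const (p := r) (Or.inr hr)
  convert h2 using 1
  · rfl
  · unfold tfun; ring

lemma hfun_nonneg (r w : ℝ) : 0 ≤ hfun r w := Real.rpow_nonneg (sq_nonneg w) r

lemma hfun_zero (r : ℝ) (hr : 1 ≤ r) : hfun r 0 = 0 := by
  unfold hfun
  rw [show ((0:ℝ) ^ 2) = 0 by ring, Real.zero_rpow (by linarith)]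

lemma hfun_neg (r w : ℝ) : hfun r (-w) = hfun r w := by unfold hfun; rw [neg_pow]; ring_nf

lemma tfun_neg (r w : ℝ) : tfun r (-w) = -tfun r w := by
  unfold tfun; rw [neg_pow]; ring_nf

lemma tfun_eq_rpow (r : ℝ) (hr : 1 ≤ r) {w : ℝ} (hw : 0 ≤ w) :
    tfun r w = 2 * r * w ^ (2 * r - 1) := by
  unfold tfun
  rcases eq_or_lt_of_le hw with h | h
  · rw [← h, Real.zero_rpow (by linarith)]
    ring
  · rw [← Real.rpow_natCast w 2, ← Real.rpow_mul hw]
    have e : (2 * r - 1) = 1 + (2:ℕ) * (r - 1) := by push_cast; ring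
    rw [e, Real.rpow_add h, Real.rpow_one]
    ring

lemma tfun_mono_nonneg (r : ℝ) (hr : 1 ≤ r) {u v : ℝ} (hu : 0 ≤ u) (huv : u ≤ v) :
    tfun r u ≤ tfun r v := by
  rw [tfun_eq_rpow r hr hu, tfun_eq_rpow r hr (le_trans hu huv)]
  have h1 : u ^ (2*r-1) ≤ v ^ (2*r-1) := Real.rpow_le_rpow hu huv (by linarith)
  have h2 : 0 ≤ u ^ (2*r-1) := Real.rpow_nonneg hu _
  nlinarith

lemma tfun_mono (r : ℝ) (hr : 1 ≤ r) : Monotone (tfun r) := by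
  intro u v huv
  rcases le_or_gt 0 u with hu | hu
  · exact tfun_mono_nonneg r hr hu huv
  rcases le_or_gt 0 v with hv | hv
  · have hA : 0 ≤ 2 * r * (u ^ 2) ^ (r - 1) := by positivity
    have hB : 0 ≤ 2 * r * (v ^ 2) ^ (r - 1) := by positivity
    have h1 : tfun r u ≤ 0 := by
      unfold tfun
      nlinarith [mul_nonneg hA (neg_nonneg.2 hu.le)]
    have h2 : 0 ≤ tfun r v := by
      unfold tfun
      nlinarith [mul_nonneg hB hv]
    linarith
  · have := tfun_mono_nonneg r hr (by linarith : (0:ℝ) ≤ -v) (by linarith : -v ≤ -u)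
    rw [tfun_neg, tfun_neg] at this
    linarith

lemma tfun_superadd (r : ℝ) (hr : 1 ≤ r) {a c : ℝ} (ha : 0 ≤ a) (hc : 0 ≤ c) :
    tfun r a + tfun r c ≤ tfun r (a + c) := by
  rw [tfun_eq_rpow r hr ha, tfun_eq_rpow r hr hc, tfun_eq_rpow r hr (by linarith)]
  have key : a ^ (2*r-1) + c ^ (2*r-1) ≤ (a + c) ^ (2*r-1) := by
    have := NNReal.add_rpow_le_rpow_add (a.toNNReal) (c.toNNReal) (p := 2*r-1) (by linarith)
    have h1 := congrArg (fun z : NNReal => (z : ℝ)) (rfl : a.toNNReal + c.toNNReal = a.toNNReal + c.toNNReal)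
    have h2 : ((a.toNNReal + c.toNNReal : NNReal) : ℝ) = a + c := by
      push_cast [Real.coe_toNNReal a ha, Real.coe_toNNReal c hc]
      ring
    calc a ^ (2*r-1) + c ^ (2*r-1)
        = ((a.toNNReal ^ (2*r-1) + c.toNNReal ^ (2*r-1) : NNReal) : ℝ) := by
          push_cast [NNReal.coe_rpow, Real.coe_toNNReal a ha, Real.coe_toNNReal c hc]
          ring
      _ ≤ ((a.toNNReal + c.toNNReal : NNReal) ^ (2*r-1) : NNReal) := by
          exact_mod_cast this
      _ = (a + c) ^ (2*r-1) := by
          rw [← h2]; push_cast [NNReal.coe_rpow]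
          ring
  have h3 : (0:ℝ) ≤ 2 * r := by linarith
  nlinarith

-- generic MVT slope bounds
lemma slope_le_of_deriv_le (f f' : ℝ → ℝ) (hd : ∀ w, HasDerivAt f (f' w) w)
    {u v C : ℝ} (huv : u ≤ v) (hC : ∀ w, u ≤ w → w ≤ v → f' w ≤ C) :
    f v - f u ≤ C * (v - u) := by
  rcases eq_or_lt_of_le huv with h | h
  · subst h; norm_num
  · obtain ⟨c, hc, hceq⟩ := exists_hasDerivAt_eq_slope f f' h
      (fun w _ => (hd w).continuousAt.continuousWithinAt) (fun w _ => hd w)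
    rw [eq_div_iff (by intro hh; exact absurd (by linarith : u = v) h.ne : v - u ≠ 0)] at hceq
    rw [← hceq]
    have := hC c hc.1.le hc.2.le
    nlinarith
lemma le_slope_of_le_deriv (f f' : ℝ → ℝ) (hd : ∀ w, HasDerivAt f (f' w) w)
    {u v C : ℝ} (huv : u ≤ v) (hC : ∀ w, u ≤ w → w ≤ v → C ≤ f' w) :
    C * (v - u) ≤ f v - f u := by
  rcases eq_or_lt_of_le huv with h | h
  · subst h; norm_num
  · obtain ⟨c, hc, hceq⟩ := exists_hasDerivAt_eq_slope f f' h
      (fun w _ => (hd w).continuousAt.continuousWithinAt) (fun w _ => hd w)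
    rw [eq_div_iff (by intro hh; exact absurd (by linarith : u = v) h.ne : v - u ≠ 0)] at hceq
    rw [← hceq]
    have := hC c hc.1.le hc.2.le
    nlinarith


-- shifted derivative
lemma hfun_shift_hasDeriv (r : ℝ) (hr : 1 ≤ r) (s w : ℝ) :
    HasDerivAt (fun w => hfun r (w - s)) (tfun r (w - s)) w := by
  have := (hfun_hasDeriv r hr (w - s)).comp w ((hasDerivAt_id w).sub_const s)
  simp only [mul_one] at this
  exact this

lemma hfun_tangent (r : ℝ) (hr : 1 ≤ r) (z w : ℝ) :
    hfun r z + tfun r z * (w - z) ≤ hfun r w := by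
  rcases le_or_gt w z with h | h
  · have := slope_le_of_deriv_le (hfun r) (tfun r) (hfun_hasDeriv r hr) h
      (fun a _ ha => tfun_mono r hr ha)
    nlinarith
  · have := le_slope_of_le_deriv (hfun r) (tfun r) (hfun_hasDeriv r hr) h.le
      (fun a ha _ => tfun_mono r hr ha)
    nlinarith

lemma hfun_super (r : ℝ) (hr : 1 ≤ r) {z w : ℝ} (hz : 0 ≤ z) (hw : 0 ≤ w) :
    hfun r z + tfun r z * (w - z) + hfun r (w - z) ≤ hfun r w := by
  have hd : ∀ a : ℝ, HasDerivAt (fun w => hfun r w - hfun r (w - z))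
      (tfun r a - tfun r (a - z)) a :=
    fun a => (hfun_hasDeriv r hr a).sub (hfun_shift_hasDeriv r hr z a)
  rcases le_or_gt z w with h | h
  · have key := le_slope_of_le_deriv _ _ hd h (C := tfun r z) (fun a ha _ => by
      have := tfun_superadd r hr (a := a - z) (c := z) (by linarith) hz
      rw [sub_add_cancel] at this
      linarith)
    have hzz : hfun r (z - z) = 0 := by rw [sub_self, hfun_zero r hr]
    simp only [hzz] at key
    linarith
  · have key := slope_le_of_deriv_le _ _ hd h.le (C := tfun r z) (fun a ha haz => by
      have := tfun_superadd r hr (a := a) (c := z - a) (by linarith) (by linarith)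
      rw [add_sub_cancel] at this
      have hneg : tfun r (a - z) = - tfun r (z - a) := by
        rw [← tfun_neg]; ring_nf
      linarith)
    have hzz : hfun r (z - z) = 0 := by rw [sub_self, hfun_zero r hr]
    have hsym : hfun r (w - z) = hfun r (z - w) := by rw [← hfun_neg]; ring_nf
    simp only [hzz] at key
    nlinarith

-- block Jensen-Steffensen for convex hfun(· - s)
lemma js_block (r : ℝ) (hr : 1 ≤ r) (a b : ℕ) (hab : a ≤ b) (t x : ℕ → ℝ) (s T : ℝ)
    (hT : T = ∑ i ∈ Icc a b, t i) (hT0 : 0 < T)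
    (hxm : ∀ i, a ≤ i → i < b → x i ≤ x (i + 1))
    (hS1 : ∀ j, a ≤ j → j ≤ b → 0 ≤ ∑ i ∈ Icc a j, t i)
    (hS2 : ∀ j, a ≤ j → j ≤ b → ∑ i ∈ Icc a j, t i ≤ ∑ i ∈ Icc a b, t i) :
    T * hfun r ((∑ i ∈ Icc a b, t i * x i) / T - s) ≤
      ∑ i ∈ Icc a b, t i * hfun r (x i - s) := by
  set Z : ℝ := (∑ i ∈ Icc a b, t i * x i) / T with hZ
  set c : ℝ := tfun r (Z - s) with hc
  set ψ : ℝ → ℝ := fun u => hfun r (u - s) - hfun r (Z - s) - c * (u - Z) with hψ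
  have key := js_icc a b hab t x Z ψ hxm hS1 hS2
    (fun i _ _ => by
      simp only [hψ]
      have := hfun_tangent r hr (Z - s) (x i - s)
      have he : (x i - s) - (Z - s) = x i - Z := by ring
      rw [he] at this
      linarith)
    (fun i _ hib hxz => by
      simp only [hψ]
      have huv := hxm i ‹a ≤ i› hib
      have hsl := slope_le_of_deriv_le _ _ (hfun_shift_hasDeriv r hr s) huv (C := c)
        (fun w _ hwv => tfun_mono r hr (by linarith : w - s ≤ Z - s))
      linarith
      )
    (fun i _ hib hxz => by
      simp only [hψ]
      have huv := hxm i ‹a ≤ i› hib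
      have hsl := le_slope_of_le_deriv _ _ (hfun_shift_hasDeriv r hr s) huv (C := c)
        (fun w hw _ => tfun_mono r hr (by linarith : Z - s ≤ w - s))
      linarith
      )
  have expand : ∀ i, t i * ψ (x i) = t i * hfun r (x i - s)
      - hfun r (Z - s) * t i - c * (t i * x i) + (c * Z) * t i := by
    intro i; simp only [hψ]; ring
  rw [Finset.sum_congr rfl (fun i _ => expand i)] at key
  rw [Finset.sum_add_distrib, Finset.sum_sub_distrib, Finset.sum_sub_distrib,
    ← Finset.mul_sum, ← Finset.mul_sum, ← Finset.mul_sum] at key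
  have hZT : ∑ i ∈ Icc a b, t i * x i = T * Z := by
    rw [hZ]; field_simp
  rw [hZT, ← hT] at key
  nlinarith [key]

-- superquadratic Jensen-Steffensen
lemma js_superquad (r : ℝ) (hr : 1 ≤ r) (a b : ℕ) (hab : a ≤ b) (t x : ℕ → ℝ)
    (hxm : ∀ i, a ≤ i → i < b → x i ≤ x (i + 1))
    (hS1 : ∀ j, a ≤ j → j ≤ b → 0 ≤ ∑ i ∈ Icc a j, t i)
    (hS2 : ∀ j, a ≤ j → j ≤ b → ∑ i ∈ Icc a j, t i ≤ ∑ i ∈ Icc a b, t i)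
    (hxnn : ∀ i, a ≤ i → i ≤ b → 0 ≤ x i)
    (Z : ℝ) (hZ0 : 0 ≤ Z)
    (hZmean : ∑ i ∈ Icc a b, t i * x i = (∑ i ∈ Icc a b, t i) * Z) :
    (∑ i ∈ Icc a b, t i * hfun r (x i - Z)) + (∑ i ∈ Icc a b, t i) * hfun r Z ≤
      ∑ i ∈ Icc a b, t i * hfun r (x i) := by
  set c : ℝ := tfun r Z with hc
  set ψ : ℝ → ℝ := fun u => hfun r u - hfun r Z - c * (u - Z) - hfun r (u - Z) with hψ
  have hd : ∀ w : ℝ, HasDerivAt (fun w => hfun r w - hfun r (w - Z))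
      (tfun r w - tfun r (w - Z)) w :=
    fun w => (hfun_hasDeriv r hr w).sub (hfun_shift_hasDeriv r hr Z w)
  have key := js_icc a b hab t x Z ψ hxm hS1 hS2
    (fun i hai hib => by
      simp only [hψ]
      have := hfun_super r hr hZ0 (hxnn i hai hib)
      linarith)
    (fun i hai hib hxz => by
      simp only [hψ]
      have huv := hxm i hai hib
      have hu0 := hxnn i hai (by omega)
      have hsl := slope_le_of_deriv_le _ _ hd huv (C := c) (fun w hw hwv => by
        have hsup := tfun_superadd r hr (a := w) (c := Z - w) (by linarith) (by linarith)
        rw [add_sub_cancel] at hsup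
        have hneg : tfun r (w - Z) = - tfun r (Z - w) := by rw [← tfun_neg]; ring_nf
        rw [hc]; linarith)
      linarith)
    (fun i hai hib hxz => by
      simp only [hψ]
      have huv := hxm i hai hib
      have hsl := le_slope_of_le_deriv _ _ hd huv (C := c) (fun w hw _ => by
        have hsup := tfun_superadd r hr (a := w - Z) (c := Z) (by linarith) hZ0
        rw [sub_add_cancel] at hsup
        rw [hc]; linarith)
      linarith)
  have expand : ∀ i, t i * ψ (x i) = t i * hfun r (x i)
      - hfun r Z * t i - c * (t i * x i) + (c * Z) * t i - t i * hfun r (x i - Z) := by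
    intro i; simp only [hψ]; ring
  rw [Finset.sum_congr rfl (fun i _ => expand i)] at key
  rw [Finset.sum_sub_distrib, Finset.sum_add_distrib, Finset.sum_sub_distrib,
    Finset.sum_sub_distrib, ← Finset.mul_sum, ← Finset.mul_sum, ← Finset.mul_sum] at key
  rw [hZmean] at key
  nlinarith [key]

-- mean lower bound
lemma js_mean_lb (a b : ℕ) (hab : a ≤ b) (t x : ℕ → ℝ)
    (hxm : ∀ i, a ≤ i → i < b → x i ≤ x (i + 1))
    (hS1 : ∀ j, a ≤ j → j ≤ b → 0 ≤ ∑ i ∈ Icc a j, t i)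
    (hS2 : ∀ j, a ≤ j → j ≤ b → ∑ i ∈ Icc a j, t i ≤ ∑ i ∈ Icc a b, t i) :
    (∑ i ∈ Icc a b, t i) * x a ≤ ∑ i ∈ Icc a b, t i * x i := by
  have hchain : ∀ i, a ≤ i → i ≤ b → x a ≤ x i := by
    intro i hai hib
    induction i, hai using Nat.le_induction with
    | base => exact le_refl _
    | succ j hj ihj => exact le_trans (ihj (by omega)) (hxm j hj (by omega))
  have key := js_icc a b hab t x (x a) (fun u => u - x a) hxm hS1 hS2
    (fun i hai hib => by simpa using hchain i hai hib)
    (fun i hai hib hxz => by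
      have h1 := hxm i hai hib
      have h2 := hchain i hai (by omega)
      linarith)
    (fun i hai hib hxz => by
      have h1 := hxm i hai hib
      linarith)
  simp only [mul_sub] at key
  rw [Finset.sum_sub_distrib, ← Finset.sum_mul] at key
  linarith


lemma abs_rpow_eq (r w : ℝ) : |w| ^ (2 * r) = hfun r w := by
  rw [show (2:ℝ) = ((2:ℕ):ℝ) by norm_num, Real.rpow_natCast_mul (abs_nonneg w), sq_abs]
  rfl

lemma rpow_eq_hfun (r : ℝ) {w : ℝ} (hw : 0 ≤ w) : w ^ (2 * r) = hfun r w := by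
  rw [show (2:ℝ) = ((2:ℕ):ℝ) by norm_num, Real.rpow_natCast_mul hw]
  rfl

/-- Corollary 2 a. of the paper: Jensen–Steffensen type coefficients, block
average bound together with the superquadratic bound for `x ↦ x^(2r)` on
`[0, b)`, `b ≤ ∞`. -/
theorem stmt_14 (n : ℕ) (hn : 2 ≤ n) (k : ℕ) (hk1 : 1 ≤ k) (hkn : k ≤ n - 1)
    (r : ℝ) (hr : 1 ≤ r) (b : EReal) (x t : ℕ → ℝ)
    (hx0 : 0 ≤ x 1)
    (hxmono : ∀ i, 1 ≤ i → i ≤ n - 1 → x i ≤ x (i + 1))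
    (hxb : ∀ i ∈ Finset.Icc 1 n, (x i : EReal) < b)
    (htsum : ∑ i ∈ Finset.Icc 1 n, t i = 1)
    (hpartial : ∀ j, 1 ≤ j → j ≤ n →
      0 ≤ ∑ i ∈ Finset.Icc 1 j, t i ∧ ∑ i ∈ Finset.Icc 1 j, t i ≤ 1)
    (hmaxk : ∀ j, j ≤ k → ∑ i ∈ Finset.Icc 1 j, t i ≤ ∑ i ∈ Finset.Icc 1 k, t i)
    (htk1 : 0 < t (k + 1))
    (hblock : ∀ l, k + 1 ≤ l → l ≤ n →
      0 ≤ ∑ i ∈ Finset.Icc (k + 1) l, t i ∧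
        ∑ i ∈ Finset.Icc (k + 1) l, t i ≤ ∑ i ∈ Finset.Icc (k + 1) n, t i)
    (P : ℝ) (hP : P = ∑ i ∈ Finset.Icc 1 k, t i) (hP0 : 0 < P) (hP1 : P < 1)
    (xbar : ℝ) (hxbar : xbar = ∑ i ∈ Finset.Icc 1 n, t i * x i)
    (y : ℕ → ℝ) (hy : ∀ i, y i = x i - xbar) :
    |(∑ i ∈ Finset.Icc 1 k, t i * x i) / P - xbar| ≤
      ((∑ i ∈ Finset.Icc 1 n, t i * |y i| ^ (2*r)) /
        (P + P ^ (2*r) * (1 - P) ^ (1 - 2*r))) ^ (1/(2*r)) ∧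
    ((∑ i ∈ Finset.Icc 1 n, t i * |y i| ^ (2*r)) /
        (P + P ^ (2*r) * (1 - P) ^ (1 - 2*r))) ^ (1/(2*r)) ≤
      (((∑ i ∈ Finset.Icc 1 n, t i * x i ^ (2*r)) - xbar ^ (2*r)) /
        (P + P ^ (2*r) * (1 - P) ^ (1 - 2*r))) ^ (1/(2*r)) := by
  have hkn' : k + 1 ≤ n := by omega
  have hQ0 : 0 < 1 - P := by linarith
  have h2r : (0:ℝ) < 2 * r := by linarith
  -- chain monotonicity
  have hchain : ∀ i j, 1 ≤ i → i ≤ j → j ≤ n → x i ≤ x j := by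
    intro i j h1 hij hjn
    induction j, hij using Nat.le_induction with
    | base => exact le_refl _
    | succ j hj ihj => exact le_trans (ihj (by omega)) (hxmono j (by omega) (by omega))
  have hxnn : ∀ i, 1 ≤ i → i ≤ n → 0 ≤ x i :=
    fun i h1 h2 => le_trans hx0 (hchain 1 i le_rfl h1 h2)
  -- split of sums
  have hsplit : ∀ f : ℕ → ℝ,
      (∑ i ∈ Icc 1 n, f i) = (∑ i ∈ Icc 1 k, f i) + ∑ i ∈ Icc (k+1) n, f i := by
    intro f
    have e1 : Icc 1 n = Ioc 0 n := by ext i; simp; omega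
    have e2 : Icc 1 k = Ioc 0 k := by ext i; simp; omega
    have e3 : Icc (k+1) n = Ioc k n := by ext i; simp
    rw [e1, e2, e3]
    exact (Finset.sum_Ioc_consecutive _ (Nat.zero_le k) (by omega)).symm
  have hQ : (∑ i ∈ Icc (k+1) n, t i) = 1 - P := by
    have := hsplit t
    rw [htsum] at this
    rw [hP]; linarith
  set Z1 : ℝ := (∑ i ∈ Icc 1 k, t i * x i) / P with hZ1
  set Z2 : ℝ := (∑ i ∈ Icc (k+1) n, t i * x i) / (1 - P) with hZ2
  have hmean : xbar = P * Z1 + (1 - P) * Z2 := by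
    rw [hxbar, hsplit (fun i => t i * x i), hZ1, hZ2]
    field_simp
  -- hypotheses packs
  have hxm_full : ∀ i, 1 ≤ i → i < n → x i ≤ x (i+1) :=
    fun i h1 h2 => hxmono i h1 (by omega)
  have hS1full : ∀ j, 1 ≤ j → j ≤ n → 0 ≤ ∑ i ∈ Icc 1 j, t i :=
    fun j h1 h2 => (hpartial j h1 h2).1
  have hS2full : ∀ j, 1 ≤ j → j ≤ n → ∑ i ∈ Icc 1 j, t i ≤ ∑ i ∈ Icc 1 n, t i := by
    intro j h1 h2; rw [htsum]; exact (hpartial j h1 h2).2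
  have hxm_b1 : ∀ i, 1 ≤ i → i < k → x i ≤ x (i+1) :=
    fun i h1 h2 => hxmono i h1 (by omega)
  have hS1b1 : ∀ j, 1 ≤ j → j ≤ k → 0 ≤ ∑ i ∈ Icc 1 j, t i :=
    fun j h1 h2 => (hpartial j h1 (by omega)).1
  have hS2b1 : ∀ j, 1 ≤ j → j ≤ k → ∑ i ∈ Icc 1 j, t i ≤ ∑ i ∈ Icc 1 k, t i :=
    fun j _ h2 => hmaxk j h2
  have hxm_b2 : ∀ i, k+1 ≤ i → i < n → x i ≤ x (i+1) :=
    fun i h1 h2 => hxmono i (by omega) (by omega)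
  have hS1b2 : ∀ j, k+1 ≤ j → j ≤ n → 0 ≤ ∑ i ∈ Icc (k+1) j, t i :=
    fun j h1 h2 => (hblock j h1 h2).1
  have hS2b2 : ∀ j, k+1 ≤ j → j ≤ n → ∑ i ∈ Icc (k+1) j, t i ≤ ∑ i ∈ Icc (k+1) n, t i :=
    fun j h1 h2 => (hblock j h1 h2).2
  -- xbar bounds
  have hxbar_lb : x 1 ≤ xbar := by
    have := js_mean_lb 1 n (by omega) t x hxm_full hS1full hS2full
    rw [htsum, one_mul] at this
    rw [hxbar]; exact this
  have hxbar0 : 0 ≤ xbar := le_trans hx0 hxbar_lb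
  -- block Jensen-Steffensen inequalities
  have hB1 := js_block r hr 1 k hk1 t x xbar P hP hP0 hxm_b1 hS1b1 hS2b1
  have hB2 := js_block r hr (k+1) n hkn' t x xbar (1-P) hQ.symm hQ0 hxm_b2 hS1b2 hS2b2
  rw [← hZ1] at hB1
  rw [← hZ2] at hB2
  -- scaling relation
  have hrel : Z2 - xbar = (-(P / (1-P))) * (Z1 - xbar) := by
    have h1 : Z1 - xbar = (1-P) * (Z1 - Z2) := by rw [hmean]; ring
    have h2 : Z2 - xbar = -(P * (Z1 - Z2)) := by rw [hmean]; ring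
    rw [h1, h2]
    field_simp
  have hscale : hfun r (Z2 - xbar) = ((P/(1-P))^2) ^ r * hfun r (Z1 - xbar) := by
    rw [hrel]
    unfold hfun
    rw [mul_pow, neg_pow]
    rw [show (-1:ℝ)^2 * (P/(1-P))^2 * (Z1-xbar)^2 = (P/(1-P))^2 * (Z1-xbar)^2 by ring]
    exact Real.mul_rpow (by positivity) (sq_nonneg _)
  have hcoef : (1-P) * ((P/(1-P))^2) ^ r = P ^ (2*r) * (1-P) ^ (1-2*r) := by
    have e1 : ((P/(1-P))^2 : ℝ) ^ r = (P/(1-P)) ^ (2*r) := by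
      rw [show (2:ℝ) = ((2:ℕ):ℝ) by norm_num, Real.rpow_natCast_mul (by positivity)]
    have e2 : (P/(1-P)) ^ (2*r) = P ^ (2*r) / (1-P) ^ (2*r) :=
      Real.div_rpow hP0.le hQ0.le _
    have e3 : (1-P) ^ (1-2*r) = (1-P) ^ (1:ℝ) / (1-P) ^ (2*r) := Real.rpow_sub hQ0 _ _
    have e4 : (0:ℝ) < (1-P) ^ (2*r) := Real.rpow_pos_of_pos hQ0 _
    rw [e1, e2, e3, Real.rpow_one]
    field_simp
  set D : ℝ := P + P ^ (2*r) * (1 - P) ^ (1 - 2*r) with hD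
  have hD0 : 0 < D := by
    have h1 : (0:ℝ) < P ^ (2*r) := Real.rpow_pos_of_pos hP0 _
    have h2 : (0:ℝ) < (1-P) ^ (1-2*r) := Real.rpow_pos_of_pos hQ0 _
    rw [hD]; nlinarith
  set S : ℝ := ∑ i ∈ Icc 1 n, t i * |y i| ^ (2*r) with hSdef
  have hSh : S = ∑ i ∈ Icc 1 n, t i * hfun r (x i - xbar) := by
    rw [hSdef]
    exact Finset.sum_congr rfl (fun i _ => by rw [hy i, abs_rpow_eq])
  have hH1nn : 0 ≤ hfun r (Z1 - xbar) := hfun_nonneg r _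
  have hSlb : D * hfun r (Z1 - xbar) ≤ S := by
    rw [hSh, hsplit (fun i => t i * hfun r (x i - xbar))]
    have h2 : (1-P) * hfun r (Z2 - xbar) = P ^ (2*r) * (1-P) ^ (1-2*r) * hfun r (Z1 - xbar) := by
      rw [hscale, ← mul_assoc, hcoef]
    rw [hD]
    nlinarith [hB1, hB2]
  have hS0 : 0 ≤ S := le_trans (mul_nonneg hD0.le hH1nn) hSlb
  -- superquadratic inequality
  have hsup := js_superquad r hr 1 n (by omega) t x hxm_full hS1full hS2full hxnn
    xbar hxbar0 (by rw [htsum, one_mul, hxbar])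
  rw [htsum, one_mul] at hsup
  have hTconv : (∑ i ∈ Icc 1 n, t i * x i ^ (2*r)) = ∑ i ∈ Icc 1 n, t i * hfun r (x i) :=
    Finset.sum_congr rfl (fun i hi => by
      rw [rpow_eq_hfun r (hxnn i (Finset.mem_Icc.1 hi).1 (Finset.mem_Icc.1 hi).2)])
  have hxbarconv : xbar ^ (2*r) = hfun r xbar := rpow_eq_hfun r hxbar0
  have hSub : S ≤ (∑ i ∈ Icc 1 n, t i * x i ^ (2*r)) - xbar ^ (2*r) := by
    rw [hTconv, hxbarconv, hSh]
    linarith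
  constructor
  · -- first inequality
    have hq : hfun r (Z1 - xbar) ≤ S / D := (le_div_iff₀ hD0).2 (by linarith)
    have habs : |Z1 - xbar| = (|Z1 - xbar| ^ (2*r)) ^ (1/(2*r)) := by
      rw [one_div, Real.rpow_rpow_inv (abs_nonneg _) (ne_of_gt h2r)]
    rw [habs]
    apply Real.rpow_le_rpow (by positivity) _ (by positivity)
    rw [abs_rpow_eq]
    exact hq
  · apply Real.rpow_le_rpow (div_nonneg hS0 hD0.le) _ (by positivity)
    exact (div_le_div_iff_of_pos_right hD0).2 hSub
end

section
/- Let a < b be reals, let r ≥ 1 be a real number, and let f : [a,b) → ℝ be differentiable, uniformly convex with modulus Φ(x) = x^{2r} (i.e. t·f(x) + (1−t)·f(y) ≥ f(t·x + (1−t)·y) + t·(1−t)·|x−y|^{2r} for all x, y ∈ [a,b), t ∈ [0,1]), and satisfying f′(y) − f′(x) ≥ sign(y−x)·2r·|y−x|^{2r−1} for all x, y ∈ [a,b). Let n ≥ 2 be an integer, fix 1 ≤ k ≤ n−1, and let x₁ ≤ x₂ ≤ … ≤ xₙ with all xᵢ ∈ [a,b). Let t₁,…,tₙ be real numbers with Σ_{i=1}^n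 tᵢ = 1, satisfying: 0 ≤ Σ_{i=1}^{j} tᵢ ≤ 1 for all 1 ≤ j ≤ n; Σ_{i=1}^{j} tᵢ ≤ Σ_{i=1}^{k} tᵢ for all j ≤ k; t_{k+1} > 0; 0 ≤ Σ_{i=k+1}^{l} tᵢ ≤ Σ_{i=k+1}^{n} tᵢ for all k+1 ≤ l ≤ n; and 0 < P_k < 1 where P_k := Σ_{i=1}^{k} tᵢ. Set x̄ = Σ_{i=1}^n tᵢxᵢ, yᵢ = xᵢ − x̄, and x_{1,k} = Σ_{i=1}^{k} tᵢxᵢ / P_k. Then |x_{1,k} − x̄| ≤ ( Σ_{i=1}^n tᵢ|yᵢ|^{2r} / ( P_k + P_k^{2r}·(1−P_k)^{1−2r} ) )^{1/(2r)} ≤ ( ( Σ_{i=1}^n tᵢf(xᵢ) − f(x̄) ) / ( P_k + P_k^{2r}·(1−P_k)^{1−2r} ) )^{1/(2r)}. -/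
open Finset Set

/-- Splitting a sum over `Icc p q` at `m`. -/
lemma my_sum_split (p m q : ℕ) (hpm : p ≤ m) (hmq : m ≤ q) (f : ℕ → ℝ) :
    ∑ i ∈ Finset.Icc p q, f i
      = (∑ i ∈ Finset.Icc p m, f i) + ∑ i ∈ Finset.Icc (m+1) q, f i := by
  rw [← Finset.sum_union]
  · apply Finset.sum_congr _ (fun _ _ => rfl)
    ext i
    simp only [Finset.mem_union, Finset.mem_Icc]
    omega
  · rw [Finset.disjoint_left]
    intro i hi hj
    simp only [Finset.mem_Icc] at hi hj
    omega

/-- Abel-type lower bound, "left" version. -/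
lemma my_left_abel (p : ℕ) (t F : ℕ → ℝ) : ∀ q, p ≤ q →
    (∀ j, p ≤ j → j ≤ q → 0 ≤ ∑ i ∈ Finset.Icc p j, t i) →
    (∀ i j, p ≤ i → i ≤ j → j ≤ q → F j ≤ F i) →
    (∑ i ∈ Finset.Icc p q, t i) * F q ≤ ∑ i ∈ Finset.Icc p q, t i * F i := by
  intro q
  induction q with
  | zero =>
    intro hpq _ _
    interval_cases p
    simp
  | succ q ih =>
    intro hpq hσ hF
    rcases Nat.lt_or_ge q p with hlt | hge
    · -- p = q + 1
      have hp : p = q + 1 := by omega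
      subst hp
      simp
    · have hsplit : ∀ G : ℕ → ℝ, ∑ i ∈ Finset.Icc p (q+1), G i
          = (∑ i ∈ Finset.Icc p q, G i) + G (q+1) := by
        intro G
        rw [my_sum_split p q (q+1) hge (by omega), Finset.Icc_self, Finset.sum_singleton]
      have h1 := ih hge (fun j h1 h2 => hσ j h1 (by omega))
        (fun i j h1 h2 h3 => hF i j h1 h2 (by omega))
      have h2 : 0 ≤ ∑ i ∈ Finset.Icc p q, t i := hσ q hge (by omega)
      have h3 : F (q+1) ≤ F q := hF q (q+1) hge (by omega) (by omega)
      rw [hsplit t, hsplit (fun i => t i * F i)]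
      nlinarith [h1, h2, h3]

/-- Abel-type lower bound, "right" version. -/
lemma my_right_abel (t F : ℕ → ℝ) : ∀ d p q, p + d = q →
    (∀ j, p ≤ j → j ≤ q → 0 ≤ ∑ i ∈ Finset.Icc j q, t i) →
    (∀ i j, p ≤ i → i ≤ j → j ≤ q → F i ≤ F j) →
    (∑ i ∈ Finset.Icc p q, t i) * F p ≤ ∑ i ∈ Finset.Icc p q, t i * F i := by
  intro d
  induction d with
  | zero =>
    intro p q h _ _
    subst h
    simp
  | succ d ih =>
    intro p q h hτ hF
    have hsplit : ∀ G : ℕ → ℝ, ∑ i ∈ Finset.Icc p q, G i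
        = G p + ∑ i ∈ Finset.Icc (p+1) q, G i := by
      intro G
      rw [my_sum_split p p q le_rfl (by omega), Finset.Icc_self, Finset.sum_singleton]
    have h1 := ih (p+1) q (by omega) (fun j h1 h2 => hτ j (by omega) h2)
      (fun i j h1 h2 h3 => hF i j (by omega) h2 h3)
    have h2 : 0 ≤ ∑ i ∈ Finset.Icc (p+1) q, t i := hτ (p+1) (by omega) (by omega)
    have h3 : F p ≤ F (p+1) := hF p (p+1) le_rfl (by omega) (by omega)
    rw [hsplit t, hsplit (fun i => t i * F i)]
    nlinarith [h1, h2, h3]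

/-- Core Jensen–Steffensen style bound. -/
lemma my_core (p q m : ℕ) (hpm : p ≤ m) (hmq : m ≤ q) (t F : ℕ → ℝ) (c₀ : ℝ)
    (hσ : ∀ j, p ≤ j → j ≤ q → 0 ≤ ∑ i ∈ Finset.Icc p j, t i)
    (hτ : ∀ j, p ≤ j → j ≤ q → 0 ≤ ∑ i ∈ Finset.Icc j q, t i)
    (hsum : ∑ i ∈ Finset.Icc p q, t i = 1)
    (hF1 : ∀ i j, p ≤ i → i ≤ j → j ≤ m → F j ≤ F i)
    (hF2 : ∀ i j, m+1 ≤ i → i ≤ j → j ≤ q → F i ≤ F j)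
    (hFm : c₀ ≤ F m) (hFm1 : m < q → c₀ ≤ F (m+1)) :
    c₀ ≤ ∑ i ∈ Finset.Icc p q, t i * F i := by
  rcases Nat.eq_or_lt_of_le hmq with hmq' | hmq'
  · -- m = q : only the left part
    subst hmq'
    have h1 := my_left_abel p t F m hpm (fun j h1 h2 => hσ j h1 h2) hF1
    rw [hsum] at h1
    nlinarith [hFm]
  · -- m < q
    have hsplit : ∀ G : ℕ → ℝ, ∑ i ∈ Finset.Icc p q, G i
        = (∑ i ∈ Finset.Icc p m, G i) + ∑ i ∈ Finset.Icc (m+1) q, G i :=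
      fun G => my_sum_split p m q hpm hmq G
    have h1 := my_left_abel p t F m hpm (fun j ha hb => hσ j ha (by omega)) hF1
    have h2 := my_right_abel t F (q - (m+1)) (m+1) q (by omega)
      (fun j ha hb => hτ j (by omega) hb) hF2
    have hσm : 0 ≤ ∑ i ∈ Finset.Icc p m, t i := hσ m hpm hmq
    have hτm : 0 ≤ ∑ i ∈ Finset.Icc (m+1) q, t i := hτ (m+1) (by omega) (by omega)
    have hsum' : (∑ i ∈ Finset.Icc p m, t i) + ∑ i ∈ Finset.Icc (m+1) q, t i = 1 := by
      rw [← hsplit t]; exact hsum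
    have hFm1' := hFm1 hmq'
    rw [hsplit (fun i => t i * F i)]
    have e1 := mul_le_mul_of_nonneg_left hFm hσm
    have e2 := mul_le_mul_of_nonneg_left hFm1' hτm
    have e3 : (∑ i ∈ Finset.Icc p m, t i) * c₀ + (∑ i ∈ Finset.Icc (m+1) q, t i) * c₀ = c₀ := by
      rw [← add_mul, hsum', one_mul]
    linarith [h1, h2, e1, e2, e3]
noncomputable def myphi (r z : ℝ) : ℝ := (z^2) ^ r
noncomputable def myphi' (r z : ℝ) : ℝ := (2*r) * (z * (z^2) ^ (r-1))

lemma myphi_hasDerivAt (r : ℝ) (hr : 1 ≤ r) (z : ℝ) :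
    HasDerivAt (myphi r) (myphi' r z) z := by
  have h1 : HasDerivAt (fun w : ℝ => w ^ r) (r * (z^2) ^ (r-1)) (z^2) :=
    Real.hasDerivAt_rpow_const (Or.inr hr)
  have h2 : HasDerivAt (fun z : ℝ => z^2) (2*z) z := by
    simpa using hasDerivAt_pow 2 z
  have h3 := HasDerivAt.comp (h₂ := fun w : ℝ => w ^ r) (h := fun z : ℝ => z^2) z h1 h2
  have h4 : myphi r = (fun w : ℝ => w ^ r) ∘ (fun z : ℝ => z^2) := rfl
  rw [h4]
  convert (show HasDerivAt ((fun w : ℝ => w ^ r) ∘ (fun z : ℝ => z^2)) (r * (z^2) ^ (r-1) * (2*z)) z from h3) using 1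
  rw [myphi']
  ring

lemma myphi_eq (r z : ℝ) : myphi r z = |z| ^ (2*r) := by
  rw [myphi, ← sq_abs, show (2*r) = (2:ℕ) * r by norm_num,
    Real.rpow_natCast_mul (abs_nonneg z)]

lemma myphi_even (r z : ℝ) : myphi r (-z) = myphi r z := by
  simp [myphi, neg_sq]

lemma myphi'_odd (r z : ℝ) : myphi' r (-z) = - myphi' r z := by
  simp [myphi', neg_sq]

lemma myphi'_zero (r : ℝ) : myphi' r 0 = 0 := by simp [myphi']

lemma myphi'_eq (r : ℝ) (hr : 1 ≤ r) (s : ℝ) (hs : 0 ≤ s) :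
    myphi' r s = (2*r) * s ^ (2*r - 1) := by
  rcases eq_or_lt_of_le hs with h | h
  · rw [← h, myphi'_zero, Real.zero_rpow (by nlinarith), mul_zero]
  · rw [myphi']
    congr 1
    have e1 : s^(2*(r-1)) = ((s^2:ℝ))^(r-1) := by
      rw [show ((2:ℝ)*(r-1)) = ((2:ℕ):ℝ)*(r-1) by norm_num, Real.rpow_natCast_mul hs]
    rw [← e1]
    rw [show (2*r-1) = 1 + 2*(r-1) by ring, Real.rpow_add h, Real.rpow_one]

lemma myphi'_mono (r : ℝ) (hr : 1 ≤ r) : Monotone (myphi' r) := by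
  have key : ∀ u v : ℝ, 0 ≤ u → u ≤ v → myphi' r u ≤ myphi' r v := by
    intro u v hu huv
    rw [myphi', myphi']
    have h1 : (u^2)^(r-1) ≤ (v^2)^(r-1) :=
      Real.rpow_le_rpow (sq_nonneg u) (by nlinarith) (by linarith)
    have h2 : (0:ℝ) ≤ (u^2)^(r-1) := Real.rpow_nonneg (sq_nonneg u) _
    have : u * (u^2)^(r-1) ≤ v * (v^2)^(r-1) :=
      mul_le_mul huv h1 h2 (by linarith)
    nlinarith
  intro u v huv
  rcases le_total 0 u with hu | hu
  · exact key u v hu huv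
  · rcases le_total 0 v with hv | hv
    · calc myphi' r u ≤ 0 := by
            have := key 0 (-u) le_rfl (by linarith)
            rw [myphi'_odd] at this
            rw [myphi'_zero] at this
            linarith
        _ ≤ myphi' r v := by
            have := key 0 v le_rfl hv
            rw [myphi'_zero] at this
            linarith
    · have := key (-v) (-u) (by linarith) (by linarith)
      rw [myphi'_odd, myphi'_odd] at this
      linarith
/-- General Jensen–Steffensen inequality with remainder. -/
lemma my_js (I : Set ℝ) (hI : Convex ℝ I)
    (g g' : ℝ → ℝ) (hg : ∀ z ∈ I, HasDerivWithinAt g (g' z) I z)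
    (R R' : ℝ → ℝ) (hR : ∀ z, HasDerivAt R (R' z) z)
    (p q : ℕ) (hp : 1 ≤ p) (hpq : p ≤ q) (x t : ℕ → ℝ)
    (hmono : ∀ i j, p ≤ i → i ≤ j → j ≤ q → x i ≤ x j)
    (hxI : ∀ i, p ≤ i → i ≤ q → x i ∈ I)
    (hsum : ∑ i ∈ Finset.Icc p q, t i = 1)
    (hσ : ∀ j, p ≤ j → j ≤ q →
      0 ≤ (∑ i ∈ Finset.Icc p j, t i) ∧ (∑ i ∈ Finset.Icc p j, t i) ≤ 1)
    (xbar : ℝ) (hxbar : xbar = ∑ i ∈ Finset.Icc p q, t i * x i)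
    (hR0 : R xbar = 0)
    (hle : ∀ z ∈ I, z ≤ xbar → xbar ∈ I → g' z - g' xbar - R' z ≤ 0)
    (hge : ∀ z ∈ I, xbar ≤ z → xbar ∈ I → 0 ≤ g' z - g' xbar - R' z) :
    g xbar + (∑ i ∈ Finset.Icc p q, t i * R (x i))
      ≤ ∑ i ∈ Finset.Icc p q, t i * g (x i) := by
  classical
  -- tail sums nonneg
  have hτ : ∀ j, p ≤ j → j ≤ q → 0 ≤ ∑ i ∈ Finset.Icc j q, t i := by
    intro j h1 h2
    rcases Nat.eq_or_lt_of_le h1 with h | h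
    · rw [← h, hsum]; norm_num
    · have hs := my_sum_split p (j-1) q (by omega) (by omega) t
      rw [show (j-1)+1 = j by omega] at hs
      have := (hσ (j-1) (by omega) (by omega)).2
      rw [hsum] at hs
      linarith
  have hσ' : ∀ j, p ≤ j → j ≤ q → 0 ≤ ∑ i ∈ Finset.Icc p j, t i :=
    fun j h1 h2 => (hσ j h1 h2).1
  -- x p ≤ xbar ≤ x q
  have hxple : x p ≤ xbar := by
    have := my_right_abel t x (q - p) p q (by omega) hτ hmono
    rw [hsum, one_mul] at this
    rw [hxbar]; exact this
  have hxbarle : xbar ≤ x q := by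
    have := my_left_abel p t (fun i => - x i) q hpq hσ'
      (fun i j h1 h2 h3 => by simpa using hmono i j h1 h2 h3)
    rw [hsum, one_mul] at this
    simp only [mul_neg] at this
    rw [Finset.sum_neg_distrib] at this
    rw [hxbar]
    linarith
  have hxbarI : xbar ∈ I :=
    hI.ordConnected.out (hxI p le_rfl hpq) (hxI q hpq le_rfl) ⟨hxple, hxbarle⟩
  -- continuity of g on I
  have hgc : ContinuousOn g I := fun z hz => (hg z hz).continuousWithinAt
  -- the auxiliary function H
  set H : ℝ → ℝ := fun z => g z - g' xbar * z - R z with hH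
  have hHd : ∀ z ∈ I, HasDerivWithinAt H (g' z - g' xbar - R' z) I z := by
    intro z hz
    have := ((hg z hz).sub (((hasDerivWithinAt_id z I).const_mul (g' xbar)))).sub
      ((hR z).hasDerivWithinAt)
    rw [mul_one] at this
    exact this
  have hHc : ContinuousOn H I := by
    apply ContinuousOn.sub (ContinuousOn.sub hgc _) _
    · exact (continuous_const.mul continuous_id).continuousOn
    · exact (fun z _ => ((hR z).continuousAt.continuousWithinAt))
  -- H is antitone on I ∩ Iic xbar
  have hanti : AntitoneOn H (I ∩ Iic xbar) := by
    apply antitoneOn_of_deriv_nonpos (hI.inter (convex_Iic xbar))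
      (hHc.mono Set.inter_subset_left)
    · intro z hz
      have hz1 : z ∈ I := interior_subset hz |>.1
      have hz2 : z ∈ interior I := interior_mono Set.inter_subset_left hz
      have : HasDerivAt H (g' z - g' xbar - R' z) z :=
        (hHd z hz1).hasDerivAt (mem_interior_iff_mem_nhds.mp hz2)
      exact this.differentiableAt.differentiableWithinAt
    · intro z hz
      have hz1 : z ∈ I ∩ Iic xbar := interior_subset hz
      have hz2 : z ∈ interior I := interior_mono Set.inter_subset_left hz
      have hd : HasDerivAt H (g' z - g' xbar - R' z) z :=
        (hHd z hz1.1).hasDerivAt (mem_interior_iff_mem_nhds.mp hz2)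
      rw [hd.deriv]
      exact hle z hz1.1 hz1.2 hxbarI
  -- H is monotone on I ∩ Ici xbar
  have hmonoH : MonotoneOn H (I ∩ Ici xbar) := by
    apply monotoneOn_of_deriv_nonneg (hI.inter (convex_Ici xbar))
      (hHc.mono Set.inter_subset_left)
    · intro z hz
      have hz1 : z ∈ I := interior_subset hz |>.1
      have hz2 : z ∈ interior I := interior_mono Set.inter_subset_left hz
      have : HasDerivAt H (g' z - g' xbar - R' z) z :=
        (hHd z hz1).hasDerivAt (mem_interior_iff_mem_nhds.mp hz2)
      exact this.differentiableAt.differentiableWithinAt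
    · intro z hz
      have hz1 : z ∈ I ∩ Ici xbar := interior_subset hz
      have hz2 : z ∈ interior I := interior_mono Set.inter_subset_left hz
      have hd : HasDerivAt H (g' z - g' xbar - R' z) z :=
        (hHd z hz1.1).hasDerivAt (mem_interior_iff_mem_nhds.mp hz2)
      rw [hd.deriv]
      exact hge z hz1.1 hz1.2 hxbarI
  -- the crossing index m
  set Pred : ℕ → Prop := fun j => p ≤ j ∧ x j ≤ xbar with hPred
  have hPp : Pred p := ⟨le_rfl, hxple⟩
  set m : ℕ := Nat.findGreatest Pred q with hm
  have hpm : p ≤ m := Nat.le_findGreatest hpq hPp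
  have hmq : m ≤ q := Nat.findGreatest_le q
  have hPm : Pred m := Nat.findGreatest_spec hpq hPp
  have hxm : x m ≤ xbar := hPm.2
  have hxm1 : m < q → xbar ≤ x (m+1) := by
    intro hlt
    have h2 : ¬ Pred (m+1) := Nat.findGreatest_is_greatest (P := Pred) (n := q) (by omega) (by omega)
    have h3 : ¬ (x (m+1) ≤ xbar) := fun hc => h2 ⟨by omega, hc⟩
    exact le_of_not_ge h3
  -- apply the core lemma to F i = H (x i)
  have hcore : H xbar ≤ ∑ i ∈ Finset.Icc p q, t i * H (x i) := by
    apply my_core p q m hpm hmq t (fun i => H (x i)) (H xbar) hσ' hτ hsum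
    · intro i j h1 h2 h3
      have hxj : x j ≤ xbar := le_trans (hmono j m (by omega) h3 hmq) hxm
      have hxi : x i ≤ xbar := le_trans (hmono i j h1 h2 (by omega)) hxj
      exact hanti ⟨hxI i h1 (by omega), hxi⟩ ⟨hxI j (by omega) (by omega), hxj⟩
        (hmono i j h1 h2 (by omega))
    · intro i j h1 h2 h3
      have hlt : m < q := by omega
      have hxi : xbar ≤ x i := le_trans (hxm1 hlt) (hmono (m+1) i (by omega) h1 (by omega))
      have hxj : xbar ≤ x j := le_trans hxi (hmono i j (by omega) h2 h3)
      exact hmonoH ⟨hxI i (by omega) (by omega), hxi⟩ ⟨hxI j (by omega) h3, hxj⟩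
        (hmono i j (by omega) h2 h3)
    · exact hanti ⟨hxI m hpm hmq, hxm⟩ ⟨hxbarI, Set.mem_Iic.mpr le_rfl⟩ hxm
    · intro hlt
      exact hmonoH ⟨hxbarI, Set.mem_Ici.mpr le_rfl⟩ ⟨hxI (m+1) (by omega) (by omega), hxm1 hlt⟩ (hxm1 hlt)
  -- unfold H and rearrange
  have expand : ∑ i ∈ Finset.Icc p q, t i * H (x i)
      = (∑ i ∈ Finset.Icc p q, t i * g (x i)) - g' xbar * xbar
        - ∑ i ∈ Finset.Icc p q, t i * R (x i) := by
    rw [hH]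
    simp only [mul_sub]
    rw [Finset.sum_sub_distrib, Finset.sum_sub_distrib]
    congr 1
    congr 1
    rw [hxbar, Finset.mul_sum]
    apply Finset.sum_congr rfl
    intro i _
    ring
  rw [expand] at hcore
  have : H xbar = g xbar - g' xbar * xbar := by rw [hH]; simp [hR0]
  rw [this] at hcore
  linarith

/-- Corollary 2 b. of the paper: Jensen–Steffensen type coefficients, block
average bound together with the Jensen-gap bound for a differentiable `f`
uniformly convex with modulus `Φ(x) = x^(2r)` whose derivative satisfies
`f′(y) − f′(x) ≥ sign(y−x)·Φ′(|y−x|)`. -/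
theorem stmt_15 (a b : ℝ) (hab : a < b) (r : ℝ) (hr : 1 ≤ r)
    (f f' : ℝ → ℝ)
    (hderiv : ∀ x ∈ Set.Ico a b, HasDerivWithinAt f (f' x) (Set.Ico a b) x)
    (hf : ∀ x ∈ Set.Ico a b, ∀ y ∈ Set.Ico a b, ∀ s ∈ Set.Icc (0:ℝ) 1,
      f (s * x + (1 - s) * y) + s * (1 - s) * |x - y| ^ (2*r)
        ≤ s * f x + (1 - s) * f y)
    (hf' : ∀ x ∈ Set.Ico a b, ∀ y ∈ Set.Ico a b,
      Real.sign (y - x) * ((2*r) * |y - x| ^ (2*r - 1)) ≤ f' y - f' x)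
    (n : ℕ) (hn : 2 ≤ n) (k : ℕ) (hk1 : 1 ≤ k) (hkn : k ≤ n - 1)
    (x t : ℕ → ℝ)
    (hxmono : ∀ i, 1 ≤ i → i ≤ n - 1 → x i ≤ x (i + 1))
    (hx : ∀ i ∈ Finset.Icc 1 n, x i ∈ Set.Ico a b)
    (htsum : ∑ i ∈ Finset.Icc 1 n, t i = 1)
    (hpartial : ∀ j, 1 ≤ j → j ≤ n →
      0 ≤ ∑ i ∈ Finset.Icc 1 j, t i ∧ ∑ i ∈ Finset.Icc 1 j, t i ≤ 1)
    (hmaxk : ∀ j, j ≤ k → ∑ i ∈ Finset.Icc 1 j, t i ≤ ∑ i ∈ Finset.Icc 1 k, t i)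
    (htk1 : 0 < t (k + 1))
    (hblock : ∀ l, k + 1 ≤ l → l ≤ n →
      0 ≤ ∑ i ∈ Finset.Icc (k + 1) l, t i ∧
        ∑ i ∈ Finset.Icc (k + 1) l, t i ≤ ∑ i ∈ Finset.Icc (k + 1) n, t i)
    (P : ℝ) (hP : P = ∑ i ∈ Finset.Icc 1 k, t i) (hP0 : 0 < P) (hP1 : P < 1)
    (xbar : ℝ) (hxbar : xbar = ∑ i ∈ Finset.Icc 1 n, t i * x i)
    (y : ℕ → ℝ) (hy : ∀ i, y i = x i - xbar) :
    |(∑ i ∈ Finset.Icc 1 k, t i * x i) / P - xbar| ≤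
      ((∑ i ∈ Finset.Icc 1 n, t i * |y i| ^ (2*r)) /
        (P + P ^ (2*r) * (1 - P) ^ (1 - 2*r))) ^ (1/(2*r)) ∧
    ((∑ i ∈ Finset.Icc 1 n, t i * |y i| ^ (2*r)) /
        (P + P ^ (2*r) * (1 - P) ^ (1 - 2*r))) ^ (1/(2*r)) ≤
      (((∑ i ∈ Finset.Icc 1 n, t i * f (x i)) - f xbar) /
        (P + P ^ (2*r) * (1 - P) ^ (1 - 2*r))) ^ (1/(2*r)) := by
  have h2r : (0:ℝ) < 2*r := by linarith
  have h1P : (0:ℝ) < 1 - P := by linarith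
  have hkn' : k + 1 ≤ n := by omega
  have hchain : ∀ i j, 1 ≤ i → i ≤ j → j ≤ n → x i ≤ x j := by
    intro i j h1 hij
    induction j, hij using Nat.le_induction with
    | base => intro _; exact le_rfl
    | succ j hij ih =>
      intro h3
      exact le_trans (ih (by omega)) (hxmono j (by omega) (by omega))
  have hxI : ∀ i, 1 ≤ i → i ≤ n → x i ∈ Set.Ico a b :=
    fun i h1 h2 => hx i (Finset.mem_Icc.mpr ⟨h1, h2⟩)
  -- Application A : f with remainder myphi r (· - xbar)
  have hRd : ∀ z : ℝ, HasDerivAt (fun w => myphi r (w - xbar)) (myphi' r (z - xbar)) z := by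
    intro z
    have h1 := myphi_hasDerivAt r hr (z - xbar)
    have h2 : HasDerivAt (fun w : ℝ => w - xbar) 1 z := (hasDerivAt_id z).sub_const xbar
    have h3 := HasDerivAt.comp (h₂ := myphi r) (h := fun w : ℝ => w - xbar) z h1 h2
    rw [mul_one] at h3
    exact h3
  have hR0 : myphi r (xbar - xbar) = 0 := by
    rw [sub_self, myphi]
    norm_num
    exact Real.zero_rpow (by linarith)
  have happA : f xbar + (∑ i ∈ Finset.Icc 1 n, t i * myphi r (x i - xbar))
      ≤ ∑ i ∈ Finset.Icc 1 n, t i * f (x i) := by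
    refine my_js (Set.Ico a b) (convex_Ico a b) f f' hderiv
      (fun w => myphi r (w - xbar)) (fun z => myphi' r (z - xbar)) hRd
      1 n le_rfl (by omega) x t hchain hxI htsum hpartial xbar hxbar hR0 ?_ ?_
    · intro z hz hzle hxbI
      have hs := hf' z hz xbar hxbI
      rcases eq_or_lt_of_le hzle with h | h
      · rw [h]; simp [myphi'_zero]
      · have hpos : 0 < xbar - z := by linarith
        rw [Real.sign_of_pos hpos, abs_of_pos hpos] at hs
        have e : myphi' r (z - xbar) = - ((2*r) * (xbar - z) ^ (2*r-1)) := by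
          rw [show z - xbar = -(xbar - z) by ring, myphi'_odd, myphi'_eq r hr _ hpos.le]
        show f' z - f' xbar - myphi' r (z - xbar) ≤ 0
        rw [e]
        linarith
    · intro z hz hzge hxbI
      have hs := hf' xbar hxbI z hz
      rcases eq_or_lt_of_le hzge with h | h
      · rw [← h]; simp [myphi'_zero]
      · have hpos : 0 < z - xbar := by linarith
        rw [Real.sign_of_pos hpos, abs_of_pos hpos] at hs
        have e : myphi' r (z - xbar) = (2*r) * (z - xbar) ^ (2*r-1) :=
          myphi'_eq r hr _ hpos.le
        show (0:ℝ) ≤ f' z - f' xbar - myphi' r (z - xbar)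
        rw [e]
        linarith
  -- set up u, v
  set u : ℝ := (∑ i ∈ Finset.Icc 1 k, t i * x i) / P - xbar with hu
  have hytk : ∑ i ∈ Finset.Icc 1 k, t i * y i
      = (∑ i ∈ Finset.Icc 1 k, t i * x i) - P * xbar := by
    simp only [hy, mul_sub]
    rw [Finset.sum_sub_distrib, ← Finset.sum_mul, ← hP]
  have hymono : ∀ i j, 1 ≤ i → i ≤ j → j ≤ n → y i ≤ y j := by
    intro i j h1 h2 h3
    rw [hy, hy]
    have := hchain i j h1 h2 h3
    linarith
  -- Application B : block 1
  have hsumB : ∑ i ∈ Finset.Icc 1 k, (t i / P) = 1 := by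
    rw [← Finset.sum_div, ← hP, div_self hP0.ne']
  have hubar : u = ∑ i ∈ Finset.Icc 1 k, (t i / P) * y i := by
    have h0 : ∑ i ∈ Finset.Icc 1 k, (t i / P) * y i
        = (∑ i ∈ Finset.Icc 1 k, t i * y i) / P := by
      rw [Finset.sum_div]
      exact Finset.sum_congr rfl (fun i _ => by ring)
    rw [h0, hytk, hu]
    field_simp
  have happB : myphi r u + (∑ i ∈ Finset.Icc 1 k, (t i / P) * (0:ℝ))
      ≤ ∑ i ∈ Finset.Icc 1 k, (t i / P) * myphi r (y i) := by
    refine my_js Set.univ convex_univ (myphi r) (myphi' r)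
      (fun z _ => (myphi_hasDerivAt r hr z).hasDerivWithinAt)
      (fun _ => (0:ℝ)) (fun _ => (0:ℝ)) (fun z => hasDerivAt_const z 0)
      1 k le_rfl hk1 y (fun i => t i / P)
      (fun i j h1 h2 h3 => hymono i j h1 h2 (by omega))
      (fun i _ _ => Set.mem_univ _) hsumB ?_ u hubar rfl ?_ ?_
    · intro j h1 h2
      rw [← Finset.sum_div]
      constructor
      · exact div_nonneg (hpartial j h1 (by omega)).1 hP0.le
      · rw [div_le_one hP0]
        rw [hP]
        exact hmaxk j h2
    · intro z _ hzle _
      have := myphi'_mono r hr hzle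
      beta_reduce
      linarith
    · intro z _ hzge _
      have := myphi'_mono r hr hzge
      beta_reduce
      linarith
  have hA : P * myphi r u ≤ ∑ i ∈ Finset.Icc 1 k, t i * myphi r (y i) := by
    have h0 : ∑ i ∈ Finset.Icc 1 k, (t i / P) * myphi r (y i)
        = (∑ i ∈ Finset.Icc 1 k, t i * myphi r (y i)) / P := by
      rw [Finset.sum_div]
      exact Finset.sum_congr rfl (fun i _ => by ring)
    have h1 := happB
    simp only [mul_zero, Finset.sum_const_zero, add_zero] at h1
    rw [h0, le_div_iff₀ hP0] at h1
    linarith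
  -- Application C : block 2
  have hQsum : ∑ i ∈ Finset.Icc (k+1) n, t i = 1 - P := by
    have h0 := my_sum_split 1 k n hk1 (by omega) t
    rw [htsum, ← hP] at h0
    linarith
  have hsumC : ∑ i ∈ Finset.Icc (k+1) n, (t i / (1-P)) = 1 := by
    rw [← Finset.sum_div, hQsum, div_self h1P.ne']
  have hytn : ∑ i ∈ Finset.Icc 1 n, t i * y i = 0 := by
    simp only [hy, mul_sub]
    rw [Finset.sum_sub_distrib, ← Finset.sum_mul, htsum, ← hxbar]
    ring
  have hytc : ∑ i ∈ Finset.Icc (k+1) n, t i * y i = -(P * u) := by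
    have h0 := my_sum_split 1 k n hk1 (by omega) (fun i => t i * y i)
    rw [hytn] at h0
    have h2 : ∑ i ∈ Finset.Icc 1 k, t i * y i = P * u := by
      rw [hytk, hu]
      field_simp
    linarith
  set v : ℝ := -(P * u) / (1 - P) with hv
  have hvbar : v = ∑ i ∈ Finset.Icc (k+1) n, (t i / (1-P)) * y i := by
    have h0 : ∑ i ∈ Finset.Icc (k+1) n, (t i / (1-P)) * y i
        = (∑ i ∈ Finset.Icc (k+1) n, t i * y i) / (1-P) := by
      rw [Finset.sum_div]
      exact Finset.sum_congr rfl (fun i _ => by ring)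
    rw [h0, hytc, hv]
  have happC : myphi r v + (∑ i ∈ Finset.Icc (k+1) n, (t i / (1-P)) * (0:ℝ))
      ≤ ∑ i ∈ Finset.Icc (k+1) n, (t i / (1-P)) * myphi r (y i) := by
    refine my_js Set.univ convex_univ (myphi r) (myphi' r)
      (fun z _ => (myphi_hasDerivAt r hr z).hasDerivWithinAt)
      (fun _ => (0:ℝ)) (fun _ => (0:ℝ)) (fun z => hasDerivAt_const z 0)
      (k+1) n (by omega) hkn' y (fun i => t i / (1-P))
      (fun i j h1 h2 h3 => hymono i j (by omega) h2 h3)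
      (fun i _ _ => Set.mem_univ _) hsumC ?_ v hvbar rfl ?_ ?_
    · intro j h1 h2
      rw [← Finset.sum_div]
      constructor
      · exact div_nonneg (hblock j h1 h2).1 h1P.le
      · rw [div_le_one h1P, ← hQsum]
        exact (hblock j h1 h2).2
    · intro z _ hzle _
      have := myphi'_mono r hr hzle
      beta_reduce
      linarith
    · intro z _ hzge _
      have := myphi'_mono r hr hzge
      beta_reduce
      linarith
  have hB : (1-P) * myphi r v ≤ ∑ i ∈ Finset.Icc (k+1) n, t i * myphi r (y i) := by
    have h0 : ∑ i ∈ Finset.Icc (k+1) n, (t i / (1-P)) * myphi r (y i)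
        = (∑ i ∈ Finset.Icc (k+1) n, t i * myphi r (y i)) / (1-P) := by
      rw [Finset.sum_div]
      exact Finset.sum_congr rfl (fun i _ => by ring)
    have h1 := happC
    simp only [mul_zero, Finset.sum_const_zero, add_zero] at h1
    rw [h0, le_div_iff₀ h1P] at h1
    linarith
  -- scaling identity
  have hval : myphi r v = (P ^ (2*r) / (1-P) ^ (2*r)) * myphi r u := by
    rw [myphi_eq, myphi_eq]
    have habs : |v| = (P / (1-P)) * |u| := by
      rw [hv, abs_div, abs_neg, abs_mul, abs_of_pos hP0, abs_of_pos h1P]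
      ring
    rw [habs, Real.mul_rpow (by positivity) (abs_nonneg u),
      Real.div_rpow hP0.le h1P.le]
  have hpow : ((1:ℝ) - P) ^ (1 - 2*r) = (1-P) / (1-P) ^ (2*r) := by
    rw [show (1 - 2*r) = 1 - 2*r from rfl, Real.rpow_sub h1P, Real.rpow_one]
  have hDpos : (0:ℝ) < P + P ^ (2*r) * (1-P) ^ (1-2*r) := by positivity
  have hphiu : (0:ℝ) ≤ myphi r u := by rw [myphi]; positivity
  have hkey : (P + P ^ (2*r) * (1-P) ^ (1-2*r)) * myphi r u
      ≤ ∑ i ∈ Finset.Icc 1 n, t i * myphi r (y i) := by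
    have hsplit := my_sum_split 1 k n hk1 (by omega) (fun i => t i * myphi r (y i))
    have e1 : (1-P) * myphi r v = P ^ (2*r) * (1-P) ^ (1-2*r) * myphi r u := by
      rw [hval, hpow]
      have hne : ((1:ℝ)-P) ^ (2*r) ≠ 0 := by positivity
      field_simp
    have e2 : (P + P ^ (2*r) * (1-P) ^ (1-2*r)) * myphi r u
        = P * myphi r u + P ^ (2*r) * (1-P) ^ (1-2*r) * myphi r u := by ring
    rw [hsplit, e2]
    linarith [hA, hB, e1]
  -- final assembly
  set S : ℝ := ∑ i ∈ Finset.Icc 1 n, t i * myphi r (y i) with hS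
  set D : ℝ := P + P ^ (2*r) * (1-P) ^ (1-2*r) with hD
  have hSnonneg : (0:ℝ) ≤ S := le_trans (mul_nonneg hDpos.le hphiu) hkey
  have hfrac : myphi r u ≤ S / D := (le_div_iff₀ hDpos).mpr (by linarith [hkey])
  have hSrw : ∑ i ∈ Finset.Icc 1 n, t i * |y i| ^ (2*r) = S :=
    Finset.sum_congr rfl (fun i _ => by rw [myphi_eq])
  have hGrw : ∑ i ∈ Finset.Icc 1 n, t i * myphi r (x i - xbar) = S :=
    Finset.sum_congr rfl (fun i _ => by rw [← hy i])
  rw [hGrw] at happA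
  constructor
  · rw [hSrw]
    have e2 : |u| = (myphi r u) ^ (1/(2*r)) := by
      rw [myphi_eq, ← Real.rpow_mul (abs_nonneg u), mul_one_div,
        div_self h2r.ne', Real.rpow_one]
    rw [e2]
    exact Real.rpow_le_rpow hphiu hfrac (by positivity)
  · rw [hSrw]
    apply Real.rpow_le_rpow (div_nonneg hSnonneg hDpos.le) ?_ (by positivity)
    apply (div_le_div_iff_of_pos_right hDpos).mpr
    linarith [happA]
end

section
/- Let φ : [0,∞) → ℝ be a convex differentiable function with φ′(0) > 0, and define g : [0,∞) → ℝ by g(x) = x·φ(x). Then for every integer n ≥ 1, all x₁,…,xₙ ≥ 0, and all weights α₁,…,αₙ ∈ [0,1] with Σ_{i=1}^n αᵢ = 1, setting x̄ = Σ_{j=1}^n αⱼxⱼ, one has Σ_{i=1}^n αᵢ·g(xᵢ) − g(x̄) ≥ φ′(0)·Σ_{i=1}^n αᵢ·(xᵢ − x̄)². -/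
section aux

variable (φ φ' : ℝ → ℝ)

lemma aux_tangent (hconv : ConvexOn ℝ (Set.Ici 0) φ)
    (hderiv : ∀ x ∈ Set.Ici (0:ℝ), HasDerivWithinAt φ (φ' x) (Set.Ici 0) x)
    {x y : ℝ} (hx : (0:ℝ) ≤ x) (hy : (0:ℝ) ≤ y) :
    φ y + φ' y * (x - y) ≤ φ x := by
  rcases lt_trichotomy x y with h | h | h
  · have hs := hconv.slope_le_of_hasDerivWithinAt hx hy h (hderiv y hy)
    rw [slope_def_field] at hs
    have hyx : (0:ℝ) < y - x := by linarith
    have := (div_le_iff₀ hyx).mp hs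
    nlinarith
  · simp [h]
  · have hs := hconv.le_slope_of_hasDerivWithinAt hy hx h (hderiv y hy)
    rw [slope_def_field] at hs
    have hxy : (0:ℝ) < x - y := by linarith
    have := (le_div_iff₀ hxy).mp hs
    nlinarith

lemma aux_mono (hconv : ConvexOn ℝ (Set.Ici 0) φ)
    (hderiv : ∀ x ∈ Set.Ici (0:ℝ), HasDerivWithinAt φ (φ' x) (Set.Ici 0) x)
    {y : ℝ} (hy : (0:ℝ) ≤ y) : φ' 0 ≤ φ' y := by
  rcases eq_or_lt_of_le hy with h | h
  · rw [← h]
  · have h1 := hconv.le_slope_of_hasDerivWithinAt (le_refl (0:ℝ)) hy h (hderiv 0 Set.self_mem_Ici)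
    have h2 := hconv.slope_le_of_hasDerivWithinAt (le_refl (0:ℝ)) hy h (hderiv y hy)
    linarith

lemma aux_key (hconv : ConvexOn ℝ (Set.Ici 0) φ)
    (hderiv : ∀ x ∈ Set.Ici (0:ℝ), HasDerivWithinAt φ (φ' x) (Set.Ici 0) x)
    {x y : ℝ} (hx : (0:ℝ) ≤ x) (hy : (0:ℝ) ≤ y) :
    φ' 0 * (x - y) ^ 2 ≤ x * φ x - y * φ y - (φ y + y * φ' y) * (x - y) := by
  have ht := aux_tangent φ φ' hconv hderiv hx hy
  have hm := aux_mono φ φ' hconv hderiv hy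
  nlinarith [mul_le_mul_of_nonneg_left (by linarith : φ' y * (x - y) ≤ φ x - φ y) hx,
    sq_nonneg (x - y), mul_le_mul_of_nonneg_right hm (sq_nonneg (x - y))]

end aux

/-- Example 1 of the paper: if `φ` is convex and differentiable on `[0,∞)` with
`φ′(0) > 0`, then `g(x) = x·φ(x)` is strongly convex in the Jensen-gap sense
with parameter `φ′(0)`. -/
theorem stmt_16 (φ φ' : ℝ → ℝ)
    (hconv : ConvexOn ℝ (Set.Ici 0) φ)
    (hderiv : ∀ x ∈ Set.Ici (0:ℝ), HasDerivWithinAt φ (φ' x) (Set.Ici 0) x)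
    (hφ'0 : 0 < φ' 0) :
    ∀ n : ℕ, 1 ≤ n → ∀ x α : ℕ → ℝ,
      (∀ i ∈ Finset.Icc 1 n, 0 ≤ x i) →
      (∀ i ∈ Finset.Icc 1 n, α i ∈ Set.Icc (0:ℝ) 1) →
      (∑ i ∈ Finset.Icc 1 n, α i = 1) →
      ∀ xbar : ℝ, xbar = ∑ j ∈ Finset.Icc 1 n, α j * x j →
        φ' 0 * ∑ i ∈ Finset.Icc 1 n, α i * (x i - xbar) ^ 2 ≤
          (∑ i ∈ Finset.Icc 1 n, α i * (x i * φ (x i))) - xbar * φ xbar := by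
  intro n hn x α hx hα hsum xbar hxbar
  have hxbar0 : (0:ℝ) ≤ xbar := by
    rw [hxbar]
    exact Finset.sum_nonneg fun i hi => mul_nonneg (hα i hi).1 (hx i hi)
  set c := φ (xbar) + xbar * φ' xbar with hc
  have hkey : ∀ i ∈ Finset.Icc 1 n,
      α i * (φ' 0 * (x i - xbar) ^ 2) ≤
        α i * (x i * φ (x i) - xbar * φ xbar - c * (x i - xbar)) := by
    intro i hi
    exact mul_le_mul_of_nonneg_left
      (aux_key φ φ' hconv hderiv (hx i hi) hxbar0) (hα i hi).1
  have hs := Finset.sum_le_sum hkey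
  have hzero : ∑ i ∈ Finset.Icc 1 n, α i * (x i - xbar) = 0 := by
    simp only [mul_sub, Finset.sum_sub_distrib, ← Finset.sum_mul, hsum, ← hxbar]
    ring
  have hrhs : ∑ i ∈ Finset.Icc 1 n, α i * (x i * φ (x i) - xbar * φ xbar - c * (x i - xbar))
      = (∑ i ∈ Finset.Icc 1 n, α i * (x i * φ (x i))) - xbar * φ xbar := by
    have : ∀ i, α i * (x i * φ (x i) - xbar * φ xbar - c * (x i - xbar))
        = α i * (x i * φ (x i)) - α i * (xbar * φ xbar) - c * (α i * (x i - xbar)) := by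
      intro i; ring
    simp only [this, Finset.sum_sub_distrib, ← Finset.sum_mul, hsum, ← Finset.mul_sum, hzero]
    ring
  have hlhs : ∑ i ∈ Finset.Icc 1 n, α i * (φ' 0 * (x i - xbar) ^ 2)
      = φ' 0 * ∑ i ∈ Finset.Icc 1 n, α i * (x i - xbar) ^ 2 := by
    rw [Finset.mul_sum]; exact Finset.sum_congr rfl fun i _ => by ring
  rw [hlhs, hrhs] at hs
  exact hs
end
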